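/- Let φ₁ : ℝ^k → ℝ^k be defined (where the denominator is nonzero) by (φ₁(x))ⱼ = (Σᵢ xᵢ² + k·xⱼ) / (Σᵢ (xᵢ+1)²). Then for every y ∈ ℝ^k with Σⱼ yⱼ = 0 and y in the image domain, the system: find z ∈ ℝ and x ∈ ℝ^k with Σᵢ xᵢ = 0 such that yⱼ = (z·Σᵢxᵢ² + k·xⱼ)/Σᵢ(zxᵢ+1)² for all j, has the solution z = 0, x = y; and if Σⱼ yⱼ = Y ≠ 0 and not all yⱼ equal, the solution (z, x) is unique with z determined by Σⱼ(kyⱼ - Y)² = kY·(k - zY)/z. -/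

import Mathlib

theorem stmt19 (k : ℕ) (hk : 1 ≤ k) (y : Fin k → ℝ) :
    let P : ℝ → (Fin k → ℝ) → Prop := fun z x =>
      (∑ i, x i = 0) ∧
      ∀ j, y j = (z * ∑ i, (x i) ^ 2 + (k : ℝ) * x j) / (∑ i, (z * x i + 1) ^ 2)
    ((∑ i, y i = 0) → P 0 y) ∧
    ((∑ i, y i ≠ 0) → (∃ i j, y i ≠ y j) →
      (∃! p : ℝ × (Fin k → ℝ), P p.1 p.2) ∧
      ∀ (z : ℝ) (x : Fin k → ℝ), P z x →
        ∑ j, ((k : ℝ) * y j - ∑ i, y i) ^ 2 =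
          (k : ℝ) * (∑ i, y i) * ((k : ℝ) - z * ∑ i, y i) / z) := by
  intro P
  have hK : (0:ℝ) < (k:ℝ) := by exact_mod_cast hk
  have hK0 : (k:ℝ) ≠ 0 := ne_of_gt hK
  have expand : ∀ (z : ℝ) (x : Fin k → ℝ),
      ∑ i, (z * x i + 1) ^ 2 =
        z ^ 2 * (∑ i, (x i) ^ 2) + 2 * z * (∑ i, x i) + (k:ℝ) := by
    intro z x
    have : ∀ i : Fin k, (z * x i + 1) ^ 2 = z ^ 2 * (x i) ^ 2 + 2 * z * x i + 1 := by
      intro i; ring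
    rw [Finset.sum_congr rfl (fun i _ => this i)]
    simp [Finset.sum_add_distrib, Finset.mul_sum]
  constructor
  · -- case ∑ y = 0
    intro hy
    refine ⟨hy, fun j => ?_⟩
    rw [expand 0 y, hy]
    simp [hK0]
  · intro hY hne
    set K := (k:ℝ) with hKdef
    set Y := ∑ i, y i with hYdef
    set Q := ∑ j, (K * y j - Y) ^ 2 with hQdef
    have hQpos : 0 < Q := by
      rcases hne with ⟨a, b, hab⟩
      have hQnn : 0 ≤ Q := Finset.sum_nonneg fun i _ => sq_nonneg _
      rcases eq_or_lt_of_le hQnn with h | h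
      · exfalso
        have hall : ∀ j : Fin k, K * y j - Y = 0 := by
          intro j
          have := (Finset.sum_eq_zero_iff_of_nonneg
            (fun i _ => sq_nonneg (K * y i - Y))).mp h.symm j (Finset.mem_univ j)
          exact pow_eq_zero_iff (n := 2) (by norm_num) |>.mp this
        have ha := hall a; have hb := hall b
        have : y a = y b := by
          have := sub_eq_sub_iff_sub_eq_sub.mp (ha.trans hb.symm)
          nlinarith [ha, hb]
        exact hab this
      · exact h
    have hQ0 : Q ≠ 0 := ne_of_gt hQpos
    set S : ℝ := K * Y ^ 2 + Q with hSdef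
    have hSpos : 0 < S := by positivity
    have hS0 : S ≠ 0 := ne_of_gt hSpos
    set z₀ : ℝ := K ^ 2 * Y / S with hz₀def
    set D₀ : ℝ := K * S / Q with hD₀def
    set x₀ : Fin k → ℝ := fun j => D₀ * (K * y j - Y) / K ^ 2 with hx₀def
    have hsx₀ : ∑ i, x₀ i = 0 := by
      simp only [hx₀def, div_eq_mul_inv, ← Finset.sum_mul, ← Finset.mul_sum]
      have : ∑ i, (K * y i - Y) = 0 := by
        rw [Finset.sum_sub_distrib, ← Finset.mul_sum, ← hYdef]
        simp [hKdef]
      rw [this]; ring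
    have ht₀ : ∑ i, (x₀ i) ^ 2 = D₀ ^ 2 * Q / K ^ 4 := by
      have : ∀ i : Fin k, (x₀ i) ^ 2 = D₀ ^ 2 / K ^ 4 * (K * y i - Y) ^ 2 := by
        intro i; simp only [hx₀def]; field_simp
      rw [Finset.sum_congr rfl (fun i _ => this i), ← Finset.mul_sum, ← hQdef]
      ring
    -- key algebraic facts about z₀, D₀
    have hzS : z₀ * S = K ^ 2 * Y := by rw [hz₀def]; field_simp
    have hD₀Q : D₀ * Q = K * S := by rw [hD₀def]; field_simp
    have hD₀pos : 0 < D₀ := by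
      rw [hD₀def]; positivity
    have hdenom₀ : ∑ i, (z₀ * x₀ i + 1) ^ 2 = D₀ := by
      rw [expand, hsx₀, ht₀]
      simp only [hz₀def, hD₀def, hSdef]
      field_simp
      ring
    have hval₀ : ∀ j, y j =
        (z₀ * ∑ i, (x₀ i) ^ 2 + K * x₀ j) / (∑ i, (z₀ * x₀ i + 1) ^ 2) := by
      intro j
      rw [hdenom₀, ht₀, eq_div_iff (ne_of_gt hD₀pos)]
      simp only [hx₀def, hz₀def, hD₀def, hSdef]
      field_simp
      ring
    have hz₀ne : z₀ ≠ 0 := by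
      rw [hz₀def]
      exact div_ne_zero (mul_ne_zero (pow_ne_zero _ hK0) hY) hS0
    -- key uniqueness lemma
    have key : ∀ (z : ℝ) (x : Fin k → ℝ), P z x →
        z = z₀ ∧ x = x₀ ∧ z ≠ 0 ∧ z * Q = K * Y * (K - z * Y) := by
      intro z x hp
      obtain ⟨hx0, hxj⟩ := hp
      set t := ∑ i, (x i) ^ 2 with htdef
      set D := ∑ i, (z * x i + 1) ^ 2 with hDdef
      have htnn : 0 ≤ t := Finset.sum_nonneg fun i _ => sq_nonneg _
      have hDeq : D = z ^ 2 * t + K := by rw [hDdef, expand, hx0]; ring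
      have hDpos : 0 < D := by
        have : 0 ≤ z ^ 2 * t := mul_nonneg (sq_nonneg z) htnn
        rw [hDeq]; linarith
      have hD0 : D ≠ 0 := ne_of_gt hDpos
      have hE : ∀ j, y j * D = z * t + K * x j := by
        intro j
        rw [hxj j]
        exact div_mul_cancel₀ _ hD0
      have hYD : Y * D = K * (z * t) := by
        have hsum : ∑ j : Fin k, (z * t + K * x j) = K * (z * t) := by
          rw [Finset.sum_add_distrib, Finset.sum_const, ← Finset.mul_sum, hx0,
            Finset.card_univ, Fintype.card_fin, nsmul_eq_mul]
          ring
        calc Y * D = ∑ j, y j * D := by rw [hYdef, Finset.sum_mul]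
          _ = ∑ j, (z * t + K * x j) := Finset.sum_congr rfl fun j _ => hE j
          _ = K * (z * t) := hsum
      have hxval : ∀ j, x j = D * (K * y j - Y) / K ^ 2 := by
        intro j
        rw [eq_div_iff (pow_ne_zero 2 hK0)]
        linear_combination (-K) * hE j + hYD
      have ht : t * K ^ 4 = D ^ 2 * Q := by
        have hterm : ∀ j, (x j) ^ 2 * K ^ 4 = D ^ 2 * (K * y j - Y) ^ 2 := by
          intro j
          rw [hxval j]
          field_simp
        calc t * K ^ 4 = ∑ j, (x j) ^ 2 * K ^ 4 := by rw [htdef, Finset.sum_mul]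
          _ = ∑ j, D ^ 2 * (K * y j - Y) ^ 2 :=
              Finset.sum_congr rfl fun j _ => hterm j
          _ = D ^ 2 * Q := by rw [hQdef, Finset.mul_sum]
      have hzne : z ≠ 0 := by
        intro h
        rw [h] at hYD
        norm_num at hYD
        exact hY (hYD.resolve_right hD0)
      have hE1 : z * D * Q = K ^ 3 * Y := by
        have h1 : Y * D * K ^ 4 = K * z * (D ^ 2 * Q) := by
          calc Y * D * K ^ 4 = K * (z * t) * K ^ 4 := by rw [hYD]
            _ = K * z * (t * K ^ 4) := by ring
            _ = K * z * (D ^ 2 * Q) := by rw [ht]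
        have h2 : K * ((z * D * Q) * D) = K * ((K ^ 3 * Y) * D) := by
          linear_combination (-1 : ℝ) * h1
        exact mul_right_cancel₀ hD0 (mul_left_cancel₀ hK0 h2)
      have hE2 : D * (K - z * Y) = K ^ 2 := by
        have h1 : D * K ^ 4 = z ^ 2 * (D ^ 2 * Q) + K ^ 5 := by
          calc D * K ^ 4 = (z ^ 2 * t + K) * K ^ 4 := by rw [hDeq]
            _ = z ^ 2 * (t * K ^ 4) + K ^ 5 := by ring
            _ = z ^ 2 * (D ^ 2 * Q) + K ^ 5 := by rw [ht]
        have h2 : K ^ 3 * (D * (K - z * Y)) = K ^ 3 * K ^ 2 := by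
          linear_combination h1 + (z * D) * hE1
        exact mul_left_cancel₀ (pow_ne_zero 3 hK0) h2
      have hzQ : z * Q = K * Y * (K - z * Y) := by
        have h1 : (z * Q) * D = (K * Y * (K - z * Y)) * D := by
          linear_combination hE1 - (K * Y) * hE2
        exact mul_right_cancel₀ hD0 h1
      have hzval : z * S = K ^ 2 * Y := by
        rw [hSdef]; linear_combination hzQ
      have hzeq : z = z₀ := by
        rw [hz₀def, eq_div_iff hS0]; exact hzval
      have h1' : (K - z * Y) * S = K * Q := by
        linear_combination (-Y) * hzval + K * hSdef
      have hDD : D = D₀ := by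
        rw [hD₀def, eq_div_iff hQ0]
        have h2 : K * (D * Q) = K * (K * S) := by
          linear_combination (-D) * h1' + S * hE2
        exact mul_left_cancel₀ hK0 h2
      refine ⟨hzeq, funext fun j => ?_, hzne, hzQ⟩
      rw [hxval j, hDD]
    refine ⟨⟨(z₀, x₀), ⟨hsx₀, hval₀⟩, ?_⟩, ?_⟩
    · rintro ⟨z, x⟩ hp
      obtain ⟨hz, hx, -, -⟩ := key z x hp
      exact Prod.ext hz hx
    · intro z x hp
      obtain ⟨-, -, hzne, hzQ⟩ := key z x hp
      rw [eq_div_iff hzne]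
      linear_combination hzQ
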